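/- arXiv:0811.1300 — 2 statements merged into one kernel-verified Lean document; each statement's English description precedes it below -/
import Mathlib

section
/- Let n ≥ 5 be an integer with n ≡ 1 (mod 4). There is a constant c > 0 depending only on n such that for every odd prime ℓ, the complete character sum S_n(ℓ) = Σ_{u=1}^{ℓ} Σ_{v=1}^{ℓ} (Δ_n(u,v) / ℓ) satisfies |S_n(ℓ)| ≤ c·ℓ, where (· / ℓ) denotes the Legendre symbol modulo ℓ. -/
open Finset

/-- The discriminant of the trinomial `t^n + a*t + b`:
`Δ_n(a,b) = (n-1)^(n-1) * a^n + n^n * b^(n-1)`. -/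
def trinomialDisc (n : ℕ) (a b : ℤ) : ℤ :=
  ((n : ℤ) - 1) ^ (n - 1) * a ^ n + (n : ℤ) ^ n * b ^ (n - 1)

section Aux

lemma qc_pow_odd {F : Type*} [Field F] [Fintype F] [DecidableEq F] {n : ℕ} (hn : Odd n)
    (x : F) : quadraticChar F x ^ n = quadraticChar F x := by
  rcases eq_or_ne x 0 with rfl | hx
  · rw [quadraticChar_zero, zero_pow hn.pos.ne']
  · rcases quadraticChar_dichotomy hx with h | h <;> rw [h]
    · exact one_pow n
    · exact hn.neg_one_pow

lemma qc_pow_even {F : Type*} [Field F] [Fintype F] [DecidableEq F] {m : ℕ} (hm : Even m)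
    {x : F} (hx : x ≠ 0) : quadraticChar F x ^ m = 1 := by
  rcases quadraticChar_dichotomy hx with h | h <;> rw [h]
  · exact one_pow m
  · exact hm.neg_one_pow

lemma key_sum (ℓ : ℕ) [Fact ℓ.Prime] (h2 : ℓ ≠ 2) {n : ℕ} (hn : Odd n) (hn2 : 2 ≤ n)
    {A : ZMod ℓ} (B : ZMod ℓ) (hA : A ≠ 0) :
    ∑ x : ZMod ℓ, ∑ y : ZMod ℓ, quadraticChar (ZMod ℓ) (A * x ^ n + B * y ^ (n - 1)) = 0 := by
  set χ := quadraticChar (ZMod ℓ) with hχ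
  have hchar : ringChar (ZMod ℓ) ≠ 2 := by rwa [ZMod.ringChar_zmod_n]
  have hsum0 : ∑ a : ZMod ℓ, χ a = 0 := quadraticChar_sum_zero hchar
  have hm : Even (n - 1) := by
    rcases hn with ⟨k, hk⟩; exact ⟨k, by omega⟩
  rw [Finset.sum_comm]
  -- split off y = 0
  rw [← Finset.sum_erase_add _ _ (mem_univ (0 : ZMod ℓ))]
  have hy0 : ∑ x : ZMod ℓ, χ (A * x ^ n + B * (0 : ZMod ℓ) ^ (n - 1)) = 0 := by
    have : ∀ x : ZMod ℓ, χ (A * x ^ n + B * (0 : ZMod ℓ) ^ (n - 1)) = χ A * χ x := by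
      intro x
      rw [zero_pow (by omega), mul_zero, add_zero, map_mul, map_pow, qc_pow_odd hn]
    rw [Finset.sum_congr rfl fun x _ => this x, ← Finset.mul_sum, hsum0, mul_zero]
  rw [hy0, add_zero]
  -- for y ≠ 0, inner sum over x equals ∑ x, χ (A * y * x ^ n + B)
  have hy : ∀ y ∈ univ.erase (0 : ZMod ℓ),
      ∑ x : ZMod ℓ, χ (A * x ^ n + B * y ^ (n - 1)) = ∑ x : ZMod ℓ, χ (A * y * x ^ n + B) := by
    intro y hy
    have hy0 : y ≠ 0 := Finset.ne_of_mem_erase hy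
    have := Equiv.sum_comp (Equiv.mulRight₀ y hy0)
      (fun x : ZMod ℓ => χ (A * x ^ n + B * y ^ (n - 1)))
    rw [← this]
    refine Finset.sum_congr rfl fun x _ => ?_
    have harg : A * (x * y) ^ n + B * y ^ (n - 1) = y ^ (n - 1) * (A * y * x ^ n + B) := by
      have h1 : y ^ n = y ^ (n - 1) * y := by
        conv_lhs => rw [show n = (n - 1) + 1 by omega]
        rw [pow_succ]
      rw [mul_pow, h1]; ring
    simp only [Equiv.mulRight₀_apply]
    rw [harg, map_mul, map_pow, qc_pow_even hm hy0, one_mul]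
  rw [Finset.sum_congr rfl hy, Finset.sum_comm]
  -- now ∑ x, ∑ y≠0, χ (A*y*x^n + B); split x = 0 and x ≠ 0
  rw [← Finset.sum_erase_add _ _ (mem_univ (0 : ZMod ℓ))]
  have hx0 : ∑ y ∈ univ.erase (0 : ZMod ℓ), χ (A * y * (0 : ZMod ℓ) ^ n + B)
      = (univ.erase (0 : ZMod ℓ)).card • χ B := by
    rw [← Finset.sum_const]
    refine Finset.sum_congr rfl fun y _ => ?_
    rw [zero_pow (by omega), mul_zero, zero_add]
  have hxne : ∀ x ∈ univ.erase (0 : ZMod ℓ),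
      ∑ y ∈ univ.erase (0 : ZMod ℓ), χ (A * y * x ^ n + B) = -χ B := by
    intro x hx
    have hx0 : x ≠ 0 := Finset.ne_of_mem_erase hx
    have hc : A * x ^ n ≠ 0 := mul_ne_zero hA (pow_ne_zero n hx0)
    have hfull : ∑ y : ZMod ℓ, χ (A * y * x ^ n + B) = 0 := by
      have e1 := Equiv.sum_comp (Equiv.mulRight₀ (A * x ^ n)⁻¹ (inv_ne_zero hc))
        (fun y : ZMod ℓ => χ (A * y * x ^ n + B))
      rw [← e1]
      have e2 := Equiv.sum_comp (Equiv.addRight B) (fun z : ZMod ℓ => χ z)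
      rw [← hsum0, ← e2]
      refine Finset.sum_congr rfl fun y _ => ?_
      simp only [Equiv.mulRight₀_apply, Equiv.coe_addRight]
      congr 1
      field_simp
    have := Finset.sum_erase_add univ (fun y : ZMod ℓ => χ (A * y * x ^ n + B)) (mem_univ 0)
    rw [hfull] at this
    have h0 : χ (A * 0 * x ^ n + B) = χ B := by rw [mul_zero, zero_mul, zero_add]
    simp only [h0] at this
    linarith
  rw [Finset.sum_congr rfl hxne, Finset.sum_const, hx0]
  simp

lemma sum_Icc_zmod (ℓ : ℕ) [NeZero ℓ] {M : Type*} [AddCommMonoid M] (f : ZMod ℓ → M) :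
    ∑ u ∈ Icc 1 ℓ, f (u : ZMod ℓ) = ∑ x : ZMod ℓ, f x := by
  have hℓ : 0 < ℓ := Nat.pos_of_ne_zero (NeZero.ne ℓ)
  refine Finset.sum_nbij' (fun u => (u : ZMod ℓ)) (fun x => if x = 0 then ℓ else x.val)
    ?_ ?_ ?_ ?_ ?_
  · intro a _; exact mem_univ _
  · intro x _
    rcases eq_or_ne x 0 with rfl | hx
    · simp [mem_Icc, hℓ]
      omega
    · have h1 : 0 < x.val := Nat.pos_of_ne_zero (fun h => hx (by rwa [← ZMod.val_eq_zero]))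
      have h2 : x.val < ℓ := ZMod.val_lt x
      simp [mem_Icc, hx, h2.le]
      omega
  · intro u hu
    rw [mem_Icc] at hu
    rcases eq_or_lt_of_le hu.2 with rfl | hlt
    · simp [ZMod.natCast_self]
    · have hv : (u : ZMod ℓ).val = u := ZMod.val_natCast_of_lt hlt
      have : (u : ZMod ℓ) ≠ 0 := by
        simp only [ne_eq, ← ZMod.val_eq_zero, hv]; omega
      simp [this, hv]
  · intro x _
    rcases eq_or_ne x 0 with rfl | hx
    · simp [ZMod.natCast_self]
    · simp [hx, ZMod.natCast_zmod_val]
  · intro a _; rfl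

lemma abs_legendre_le_one (ℓ : ℕ) [Fact ℓ.Prime] (a : ℤ) : |legendreSym ℓ a| ≤ 1 := by
  rcases eq_or_ne ((a : ZMod ℓ)) 0 with h | h
  · rw [(legendreSym.eq_zero_iff ℓ a).mpr h]; norm_num
  · rcases legendreSym.eq_one_or_neg_one ℓ h with h1 | h1 <;> rw [h1] <;> norm_num

end Aux

theorem stmt_3 (n : ℕ) (hn : 5 ≤ n) (hn4 : n % 4 = 1) :
    ∃ c : ℝ, 0 < c ∧
      ∀ ℓ : ℕ, ∀ hℓ : ℓ.Prime, Odd ℓ →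
        (|∑ u ∈ Finset.Icc 1 ℓ, ∑ v ∈ Finset.Icc 1 ℓ,
            @legendreSym ℓ ⟨hℓ⟩ (trinomialDisc n (u : ℤ) (v : ℤ))| : ℝ) ≤ c * ℓ := by
  refine ⟨(n : ℝ) ^ 2, by positivity, ?_⟩
  intro ℓ hℓ hodd
  haveI : Fact ℓ.Prime := ⟨hℓ⟩
  haveI : NeZero ℓ := ⟨hℓ.pos.ne'⟩
  have h2 : ℓ ≠ 2 := by
    intro h; rw [h] at hodd; exact (Nat.not_odd_iff_even.mpr (by norm_num)) hodd
  have hoddn : Odd n := Nat.odd_iff.mpr (by omega)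
  by_cases hdvd : ℓ ∣ (n - 1)
  -- small case: trivial bound
  · have hle : ℓ ≤ n - 1 := Nat.le_of_dvd (by omega) hdvd
    have htriv : |∑ u ∈ Finset.Icc 1 ℓ, ∑ v ∈ Finset.Icc 1 ℓ,
        legendreSym ℓ (trinomialDisc n (u : ℤ) (v : ℤ))| ≤ (ℓ : ℤ) * ℓ := by
      calc |∑ u ∈ Finset.Icc 1 ℓ, ∑ v ∈ Finset.Icc 1 ℓ,
            legendreSym ℓ (trinomialDisc n (u : ℤ) (v : ℤ))|
          ≤ ∑ u ∈ Finset.Icc 1 ℓ, |∑ v ∈ Finset.Icc 1 ℓ,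
            legendreSym ℓ (trinomialDisc n (u : ℤ) (v : ℤ))| := Finset.abs_sum_le_sum_abs _ _
        _ ≤ ∑ u ∈ Finset.Icc 1 ℓ, ∑ v ∈ Finset.Icc 1 ℓ, (1 : ℤ) := by
            refine Finset.sum_le_sum fun u _ => ?_
            calc |∑ v ∈ Finset.Icc 1 ℓ, legendreSym ℓ (trinomialDisc n (u : ℤ) (v : ℤ))|
                ≤ ∑ v ∈ Finset.Icc 1 ℓ, |legendreSym ℓ (trinomialDisc n (u : ℤ) (v : ℤ))| :=
                  Finset.abs_sum_le_sum_abs _ _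
              _ ≤ ∑ v ∈ Finset.Icc 1 ℓ, (1 : ℤ) :=
                  Finset.sum_le_sum fun v _ => abs_legendre_le_one ℓ _
        _ = (ℓ : ℤ) * ℓ := by simp [Nat.card_Icc, mul_comm]
    have h1 : (|∑ u ∈ Finset.Icc 1 ℓ, ∑ v ∈ Finset.Icc 1 ℓ,
        legendreSym ℓ (trinomialDisc n (u : ℤ) (v : ℤ))| : ℝ) ≤ (ℓ : ℝ) * ℓ := by
      exact_mod_cast htriv
    refine h1.trans ?_
    have hℓn : (ℓ : ℝ) ≤ (n : ℝ) ^ 2 := by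
      have h3 : ℓ ≤ n ^ 2 := le_trans hle (le_trans (by omega) (Nat.le_self_pow (by norm_num) n))
      exact_mod_cast h3
    have hℓ0 : (0 : ℝ) ≤ ℓ := by positivity
    nlinarith [mul_le_mul_of_nonneg_right hℓn hℓ0]
  -- main case: the sum vanishes
  · have hA : ((n : ZMod ℓ) - 1) ^ (n - 1) ≠ 0 := by
      apply pow_ne_zero
      intro h
      apply hdvd
      have : (((n - 1 : ℕ) : ZMod ℓ)) = 0 := by
        push_cast [Nat.cast_sub (by omega : 1 ≤ n)]
        exact h
      exact (ZMod.natCast_eq_zero_iff _ _).mp this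
    have hzero : ∑ u ∈ Finset.Icc 1 ℓ, ∑ v ∈ Finset.Icc 1 ℓ,
        legendreSym ℓ (trinomialDisc n (u : ℤ) (v : ℤ)) = 0 := by
      have hterm : ∀ u v : ℕ, legendreSym ℓ (trinomialDisc n (u : ℤ) (v : ℤ)) =
          quadraticChar (ZMod ℓ) (((n : ZMod ℓ) - 1) ^ (n - 1) * (u : ZMod ℓ) ^ n
            + (n : ZMod ℓ) ^ n * (v : ZMod ℓ) ^ (n - 1)) := by
        intro u v
        rw [legendreSym, trinomialDisc]
        congr 1
        push_cast
        ring
      calc ∑ u ∈ Finset.Icc 1 ℓ, ∑ v ∈ Finset.Icc 1 ℓ,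
            legendreSym ℓ (trinomialDisc n (u : ℤ) (v : ℤ))
          = ∑ u ∈ Finset.Icc 1 ℓ, ∑ y : ZMod ℓ,
            quadraticChar (ZMod ℓ) (((n : ZMod ℓ) - 1) ^ (n - 1) * (u : ZMod ℓ) ^ n
              + (n : ZMod ℓ) ^ n * y ^ (n - 1)) := by
            refine Finset.sum_congr rfl fun u _ => ?_
            rw [Finset.sum_congr rfl fun v _ => hterm u v]
            exact sum_Icc_zmod ℓ (fun y => quadraticChar (ZMod ℓ)
              (((n : ZMod ℓ) - 1) ^ (n - 1) * (u : ZMod ℓ) ^ n + (n : ZMod ℓ) ^ n * y ^ (n - 1)))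
        _ = ∑ x : ZMod ℓ, ∑ y : ZMod ℓ,
            quadraticChar (ZMod ℓ) (((n : ZMod ℓ) - 1) ^ (n - 1) * x ^ n
              + (n : ZMod ℓ) ^ n * y ^ (n - 1)) :=
            sum_Icc_zmod ℓ (fun x => ∑ y : ZMod ℓ, quadraticChar (ZMod ℓ)
              (((n : ZMod ℓ) - 1) ^ (n - 1) * x ^ n + (n : ZMod ℓ) ^ n * y ^ (n - 1)))
        _ = 0 := key_sum ℓ h2 hoddn (by omega) _ hA
    have hz : (∑ u ∈ Finset.Icc 1 ℓ, ∑ v ∈ Finset.Icc 1 ℓ,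
        ((legendreSym ℓ (trinomialDisc n (u : ℤ) (v : ℤ)) : ℤ) : ℝ)) = 0 := by
      exact_mod_cast hzero
    rw [hz, abs_zero]
    positivity
end

section
/- Let n ≥ 5 be an integer with n ≡ 1 (mod 4), let a, b be integers such that f = t^n + a·t + b is irreducible over ℚ, and let θ be a root of f in an algebraic closure of ℚ. Then the discriminant of the power basis 1, θ, θ², …, θ^{n-1} of the number field ℚ(θ) over ℚ equals (n-1)^{n-1}·a^n + n^n·b^{n-1}. -/
open Polynomial IntermediateField

lemma norm_aeval_gen {K L E : Type*} [Field K] [Field L] [Field E] [Algebra K L] [Algebra K E]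
    [FiniteDimensional K L] [Algebra.IsSeparable K L] [IsAlgClosed E]
    (pb : PowerBasis K L) (g : K[X]) :
    algebraMap K E (Algebra.norm K (aeval pb.gen g)) =
      (((minpoly K pb.gen).aroots E).map (fun r => aeval r g)).prod := by
  letI := Classical.decEq E
  rw [Algebra.norm_eq_prod_embeddings]
  rw [Fintype.prod_equiv pb.liftEquiv' (fun σ : L →ₐ[K] E => σ (aeval pb.gen g))
    (fun y => aeval (y : E) g) (fun σ => by
      simp only [PowerBasis.liftEquiv'_apply_coe, PowerBasis.liftEquiv_apply_coe]
      exact (aeval_algHom_apply σ pb.gen g).symm)]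
  rw [Finset.prod_mem_multiset _ _ (fun r => aeval r g) (fun x => rfl),
    Finset.prod_eq_multiset_prod, Multiset.toFinset_val,
    Multiset.dedup_eq_self.mpr
      (nodup_roots (Polynomial.Separable.map (Algebra.IsSeparable.isSeparable K pb.gen)))]


set_option maxHeartbeats 2000000 in
theorem stmt_10 (n : ℕ) (hn : 5 ≤ n) (hn4 : n % 4 = 1) (a b : ℤ)
    (hirr : Irreducible (X ^ n + C ((a : ℚ)) * X + C ((b : ℚ))))
    (θ : AlgebraicClosure ℚ)
    (hθ : Polynomial.aeval θ (X ^ n + C ((a : ℚ)) * X + C ((b : ℚ))) = 0) :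
    -- the discriminant of the power basis `1, θ, θ², …, θ^{n-1}` of `ℚ(θ)/ℚ`
    Algebra.discr ℚ (fun i : Fin n => (AdjoinSimple.gen ℚ θ) ^ (i : ℕ)) =
      ((((n : ℤ) - 1) ^ (n - 1) * a ^ n + (n : ℤ) ^ n * b ^ (n - 1) : ℤ) : ℚ) := by

  obtain ⟨k, rfl⟩ : ∃ k, n = 4 * k + 1 := ⟨n / 4, by omega⟩
  have hk : 1 ≤ k := by omega
  have hk' : k ≠ 0 := by omega
  set f : ℚ[X] := X ^ (4*k+1) + C ((a : ℚ)) * X + C ((b : ℚ)) with hf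
  clear hn4 hn
  have hmonic : f.Monic := by rw [hf]; monicity!; intro h; exact absurd h hk'
  have hdeg : f.natDegree = 4*k+1 := by rw [hf]; compute_degree!; simp [hk']
  have hθint : IsIntegral ℚ θ := ⟨f, hmonic, hθ⟩
  have hmin : minpoly ℚ θ = f := (minpoly.eq_of_irreducible_of_monic hirr hθ hmonic).symm
  haveI : FiniteDimensional ℚ ℚ⟮θ⟯ := IntermediateField.adjoin.finiteDimensional hθint
  set pb := IntermediateField.adjoin.powerBasis hθint with hpb
  have hgen : pb.gen = AdjoinSimple.gen ℚ θ := IntermediateField.adjoin.powerBasis_gen hθint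
  have hminpb : minpoly ℚ pb.gen = f := by rw [hgen]; erw [minpoly_gen]; exact hmin
  have hdim : pb.dim = 4*k+1 := by
    rw [IntermediateField.adjoin.powerBasis_dim, hmin, hdeg]
  -- reindex
  have hre : (fun i : Fin (4*k+1) => (AdjoinSimple.gen ℚ θ) ^ (i : ℕ))
      = (pb.basis ∘ ⇑(finCongr hdim).symm) := by
    funext i
    simp [PowerBasis.coe_basis, hgen]
  rw [hre, Algebra.discr_reindex]; erw [Algebra.discr_powerBasis_eq_norm]
  -- sign
  have hfinrank : Module.finrank ℚ ℚ⟮θ⟯ = 4*k+1 := by rw [← hdim]; exact pb.finrank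
  have hsign : (-1 : ℚ) ^ (Module.finrank ℚ ℚ⟮θ⟯ * (Module.finrank ℚ ℚ⟮θ⟯ - 1) / 2) = 1 := by
    rw [hfinrank, Nat.add_sub_cancel,
      show (4*k+1)*(4*k) = ((4*k+1)*(2*k))*2 from by ring,
      Nat.mul_div_cancel _ two_pos]
    exact Even.neg_one_pow ⟨(4*k+1)*k, by ring⟩
  rw [hsign, one_mul, hminpb]
  -- now compute the norm via the roots of f in the algebraic closure
  apply (algebraMap ℚ (AlgebraicClosure ℚ)).injective
  erw [norm_aeval_gen (E := AlgebraicClosure ℚ) pb (derivative f)]; erw [hminpb]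
  set A : AlgebraicClosure ℚ := ((a : ℤ) : AlgebraicClosure ℚ) with hA
  set B : AlgebraicClosure ℚ := ((b : ℤ) : AlgebraicClosure ℚ) with hB
  set R : Multiset (AlgebraicClosure ℚ) := f.aroots (AlgebraicClosure ℚ) with hR
  clear_value A B R
  have hbne : b ≠ 0 := by
    rintro rfl
    have hsplit : f = X * (X ^ (4*k) + C ((a:ℚ))) := by
      rw [hf]; push_cast; rw [C_0, add_zero]; ring
    rcases hirr.isUnit_or_isUnit hsplit with h | h
    · exact Polynomial.not_isUnit_X h
    · have hd : (X ^ (4*k) + C ((a:ℚ))).natDegree = 4*k := by compute_degree!; simp [hk']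
      have := Polynomial.natDegree_eq_zero_of_isUnit h
      omega
  have hBne : B ≠ 0 := by
    simpa [hB] using (Int.cast_ne_zero (α := AlgebraicClosure ℚ)).mpr hbne
  have haevf : ∀ x : AlgebraicClosure ℚ, aeval x f = x ^ (4*k+1) + A * x + B := by
    intro x
    rw [hf]
    simp [hA, hB, map_intCast]
  have haev : ∀ r : AlgebraicClosure ℚ, aeval r (derivative f) = (4*(k : AlgebraicClosure ℚ)+1) * r ^ (4*k) + A := by
    intro r
    rw [hf]
    simp [derivative_X_pow, hA, map_intCast]
  have heval : ∀ x : AlgebraicClosure ℚ, eval x (f.map (algebraMap ℚ (AlgebraicClosure ℚ))) = x ^ (4*k+1) + A * x + B := by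
    intro x
    rw [Polynomial.eval_map, ← aeval_def, haevf]
  have hroot : ∀ r ∈ R, r ^ (4*k+1) + A * r + B = 0 := by
    intro r hr
    rw [hR] at hr
    have := (Polynomial.mem_roots (Polynomial.map_monic_ne_zero hmonic)).1 hr
    rw [Polynomial.IsRoot, heval] at this
    exact this
  have hfne : f ≠ 0 := hmonic.ne_zero
  have hfac : f.map (algebraMap ℚ (AlgebraicClosure ℚ)) = (R.map fun r => X - C r).prod := by
    rw [hR]
    exact (IsAlgClosed.splits _).eq_prod_roots_of_monic (hmonic.map _)
  have hcard : Multiset.card R = 4*k+1 := by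
    rw [hR]
    have hsp : Polynomial.Splits (f.map (algebraMap ℚ (AlgebraicClosure ℚ))) := IsAlgClosed.splits _
    have := (Polynomial.splits_iff_card_roots).1 hsp
    rwa [Polynomial.natDegree_map, hdeg] at this
  -- product of the roots
  have hprodR : R.prod = -B := by
    have h0 := congrArg (eval 0) hfac
    rw [heval 0, Polynomial.eval_multiset_prod, Multiset.map_map] at h0
    have h1 : (R.map fun r => eval 0 (X - C r)) = R.map fun r => -r := by
      apply Multiset.map_congr rfl
      intro r _
      simp
    rw [Function.comp_def] at h0
    rw [h1, Multiset.prod_map_neg, hcard, Odd.neg_one_pow ⟨2*k, by ring⟩,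
      zero_pow (by omega : 4*k+1 ≠ 0), mul_zero, zero_add, neg_mul, one_mul] at h0
    linear_combination h0
  -- rewrite the goal product
  have hmapgoal : (R.map fun r => aeval r (derivative f)) =
      R.map (fun r => (4*(k : AlgebraicClosure ℚ)+1) * r ^ (4*k) + A) :=
    Multiset.map_congr rfl fun r _ => haev r
  rw [hmapgoal]
  clear_value f pb
  clear hre hsign hfinrank hmapgoal hminpb hgen hdim hpb hmin hdeg hmonic hθ hirr hf hθint haevf haev pb
  set T : AlgebraicClosure ℚ := (4*(k : AlgebraicClosure ℚ)) ^ (4*k) * A ^ (4*k+1) + (4*(k : AlgebraicClosure ℚ)+1) ^ (4*k+1) * B ^ (4*k) with hT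
  clear_value T
  -- step A : multiply by the product of the roots
  have hstepA : (R.map (fun r => (4*(k : AlgebraicClosure ℚ)+1) * r ^ (4*k) + A)).prod * R.prod
      = (R.map fun r => -(4*(k : AlgebraicClosure ℚ)) * A * r - (4*(k : AlgebraicClosure ℚ)+1) * B).prod := by
    conv_lhs => rw [show R.prod = (R.map (fun r => r)).prod by rw [Multiset.map_id']]
    rw [← Multiset.prod_map_mul]
    refine congrArg Multiset.prod (Multiset.map_congr rfl fun r hr => ?_)
    have h := hroot r hr
    linear_combination (4*(k : AlgebraicClosure ℚ)+1) * h
  -- step B : compute the linear product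
  have hstepB : (R.map fun r => -(4*(k : AlgebraicClosure ℚ)) * A * r - (4*(k : AlgebraicClosure ℚ)+1) * B).prod = T * (-B) := by
    by_cases ha : a = 0
    · subst ha
      have hA0 : A = 0 := by simp [hA]
      have hconst : (R.map fun r => -(4*(k : AlgebraicClosure ℚ)) * A * r - (4*(k : AlgebraicClosure ℚ)+1) * B)
          = R.map (fun _ => -((4*(k : AlgebraicClosure ℚ)+1) * B)) := by
        refine Multiset.map_congr rfl fun r _ => by rw [hA0]; ring
      rw [hconst, Multiset.map_const', Multiset.prod_replicate, hcard, hT, hA0,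
        Odd.neg_pow ⟨2*k, by ring⟩, mul_pow, zero_pow (by omega : 4*k+1 ≠ 0)]
      ring
    · have hAne : A ≠ 0 := by simpa [hA] using (Int.cast_ne_zero (α := AlgebraicClosure ℚ)).mpr ha
      set c : AlgebraicClosure ℚ := -(4*(k : AlgebraicClosure ℚ)) * A with hc
      clear_value c
      have hcne : c ≠ 0 := by
        rw [hc]
        refine mul_ne_zero (neg_ne_zero.mpr ?_) hAne
        have h4 := Nat.cast_ne_zero (R := AlgebraicClosure ℚ) |>.mpr (show 4*k ≠ 0 by omega)
        push_cast at h4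
        exact h4
      set x0 : AlgebraicClosure ℚ := ((4*(k : AlgebraicClosure ℚ)+1) * B) / c with hx0
      clear_value x0
      have hcx : c * x0 = (4*(k : AlgebraicClosure ℚ)+1) * B := by
        rw [hx0]; field_simp
      have hlin : (R.map fun r => c * r - (4*(k : AlgebraicClosure ℚ)+1) * B)
          = R.map (fun r => (-c) * (x0 - r)) :=
        Multiset.map_congr rfl fun r _ => by linear_combination hcx
      rw [hlin, Multiset.prod_map_mul, Multiset.map_const', Multiset.prod_replicate, hcard]
      have hevalx0 : (R.map fun r => x0 - r).prod = x0 ^ (4*k+1) + A * x0 + B := by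
        rw [← heval x0, hfac, Polynomial.eval_multiset_prod, Multiset.map_map]
        refine congrArg Multiset.prod (Multiset.map_congr rfl fun r _ => ?_)
        simp
      have hc' : c = -((4*(k : AlgebraicClosure ℚ))*A) := by rw [hc]; ring
      have key : c^(4*k+1) * (x0^(4*k+1) + A*x0 + B)
          = (c*x0)^(4*k+1) + A*(c*x0)*c^(4*k) + B*c^(4*k+1) := by ring
      calc (-c)^(4*k+1) * ((R.map fun r => x0 - r).prod)
          = -(c^(4*k+1) * (x0^(4*k+1) + A*x0 + B)) := by
            rw [hevalx0, Odd.neg_pow ⟨2*k, by ring⟩]; ring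
        _ = -((c*x0)^(4*k+1) + A*(c*x0)*c^(4*k) + B*c^(4*k+1)) := by rw [key]
        _ = -(((4*(k : AlgebraicClosure ℚ)+1)*B)^(4*k+1) + A*((4*(k : AlgebraicClosure ℚ)+1)*B)*c^(4*k) + B*c^(4*k+1)) := by
            rw [hcx]
        _ = -(((4*(k : AlgebraicClosure ℚ)+1)*B)^(4*k+1) + A*((4*(k : AlgebraicClosure ℚ)+1)*B)*((4*(k : AlgebraicClosure ℚ))*A)^(4*k)
              + B*(-(((4*(k : AlgebraicClosure ℚ))*A)^(4*k+1)))) := by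
            rw [hc', Even.neg_pow ⟨2*k, by ring⟩, Odd.neg_pow ⟨2*k, by ring⟩]
        _ = T * (-B) := by simp only [mul_pow]; rw [hT]; ring
  have hfinal : (R.map (fun r => (4*(k : AlgebraicClosure ℚ)+1) * r ^ (4*k) + A)).prod = T :=
    mul_right_cancel₀ (neg_ne_zero.mpr hBne) (by
      conv_lhs => rw [← hprodR]
      rw [hstepA, hstepB])
  rw [hfinal, hT]
  -- identify the target
  rw [show ((((((4*k+1 : ℕ) : ℤ) - 1) ^ (4*k+1-1) * a ^ (4*k+1)
      + ((4*k+1 : ℕ) : ℤ) ^ (4*k+1) * b ^ (4*k+1-1) : ℤ)) : ℚ)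
      = (((4*k : ℕ) : ℚ)) ^ (4*k) * (a:ℚ) ^ (4*k+1) + (((4*k+1 : ℕ) : ℚ)) ^ (4*k+1) * (b:ℚ) ^ (4*k)
      from by simp only [Nat.add_sub_cancel]; push_cast; ring]
  simp only [map_add, map_mul, map_pow, map_natCast, map_intCast]
  push_cast [hA, hB]
  ring
end
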